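/- Let A = P^h Q^k in 𝔽₄[x], where P and Q are distinct monic irreducible polynomials with deg P ≤ deg Q and h, k are positive integers. If A is bi-unitary perfect, then Q = P + 1 and either h = k = 2, or h = k = 2^r − 1 for some natural number r. -/

import Mathlib

open Polynomial
open scoped Classical

noncomputable section

/-- The field with four elements. -/
abbrev F4 : Type := GaloisField 2 2

/-- `D` is a unitary divisor of `S`: `D ∣ S` and `gcd(D, S / D) = 1`. -/
def IsUnitaryDivisor (D S : F4[X]) : Prop :=
  D ∣ S ∧ IsCoprime D (S / D)

/-- The greatest common unitary divisor of `S` and `T`: a monic common unitary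
divisor of `S` and `T` of maximal degree. -/
noncomputable def gcdU (S T : F4[X]) : F4[X] :=
  if h : ∃ D : F4[X], D.Monic ∧ IsUnitaryDivisor D S ∧ IsUnitaryDivisor D T ∧
      ∀ E : F4[X], E.Monic → IsUnitaryDivisor E S → IsUnitaryDivisor E T →
        E.degree ≤ D.degree
  then h.choose else 0

/-- `D` is a bi-unitary divisor of `S`: `D ∣ S` and `gcd_u(D, S / D) = 1`. -/
def IsBiunitaryDivisor (D S : F4[X]) : Prop :=
  D ∣ S ∧ gcdU D (S / D) = 1

/-- `σ(S)`: the sum of all monic divisors of `S`. -/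
noncomputable def sigma' (S : F4[X]) : F4[X] :=
  ∑ᶠ D ∈ {D : F4[X] | D.Monic ∧ D ∣ S}, D

/-- `σ**(S)`: the sum of all monic bi-unitary divisors of `S`. -/
noncomputable def sigmaBU (S : F4[X]) : F4[X] :=
  ∑ᶠ D ∈ {D : F4[X] | D.Monic ∧ IsBiunitaryDivisor D S}, D

/-- `S` is perfect if `σ(S) = S`. -/
def IsPerfect (S : F4[X]) : Prop := sigma' S = S

/-- `S` is bi-unitary perfect if `σ**(S) = S`. -/
def IsBUPerfect (S : F4[X]) : Prop := sigmaBU S = S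

/-- `ω(S)`: the number of distinct monic irreducible factors of `S`. -/
noncomputable def omegaCount (S : F4[X]) : ℕ :=
  Set.ncard {P : F4[X] | P.Monic ∧ Irreducible P ∧ P ∣ S}

/-- `Ω₁`: `P` and `P + 1` are both irreducible. -/
def Omega1 (P : F4[X]) : Prop :=
  Irreducible P ∧ Irreducible (P + 1)

/-- `Ω₂`: `P`, `P + 1`, `P³ + P + 1` and `P³ + P² + 1` are all irreducible. -/
def Omega2 (P : F4[X]) : Prop :=
  Irreducible P ∧ Irreducible (P + 1) ∧
    Irreducible (P ^ 3 + P + 1) ∧ Irreducible (P ^ 3 + P ^ 2 + 1)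

/-- A bi-unitary perfect polynomial is indecomposable if it has no proper
(monic, nontrivial) divisor which is bi-unitary perfect. -/
def IsIndecomposable (A : F4[X]) : Prop :=
  ¬ ∃ D : F4[X], D.Monic ∧ D ∣ A ∧ D ≠ 1 ∧ D ≠ A ∧ IsBUPerfect D

set_option linter.unusedSectionVars false

lemma gcdU_eq_one_iff {S T : F4[X]} :
    gcdU S T = 1 ↔ ∀ E : F4[X], E.Monic → IsUnitaryDivisor E S → IsUnitaryDivisor E T → E = 1 := by
  constructor
  · intro hg E hEm hES hET
    unfold gcdU at hg
    split_ifs at hg with hex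
    · obtain ⟨hDm, hDS, hDT, hmax⟩ := hex.choose_spec
      have hle := hmax E hEm hES hET
      rw [hg] at hle
      have h0 : E.degree ≤ 0 := by simpa using hle
      exact eq_one_of_monic_natDegree_zero hEm (natDegree_eq_zero_iff_degree_le_zero.mpr h0)
    · exact absurd hg.symm one_ne_zero
  · intro hall
    have hud1S : IsUnitaryDivisor 1 S := ⟨one_dvd _, isCoprime_one_left⟩
    have hud1T : IsUnitaryDivisor 1 T := ⟨one_dvd _, isCoprime_one_left⟩
    have hex : ∃ D : F4[X], D.Monic ∧ IsUnitaryDivisor D S ∧ IsUnitaryDivisor D T ∧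
        ∀ E : F4[X], E.Monic → IsUnitaryDivisor E S → IsUnitaryDivisor E T →
          E.degree ≤ D.degree :=
      ⟨1, monic_one, hud1S, hud1T, fun E hE h1 h2 => le_of_eq (by rw [hall E hE h1 h2])⟩
    rw [gcdU, dif_pos hex]
    obtain ⟨hm, h1, h2, _⟩ := hex.choose_spec
    exact hall _ hm h1 h2


def BUcond (a h : ℕ) : Prop := a = 0 ∨ h - a = 0 ∨ a ≠ h - a

def GS (P : F4[X]) (m : ℕ) : F4[X] := ∑ i ∈ Finset.range m, P ^ i

noncomputable def SE (P : F4[X]) (h : ℕ) : F4[X] :=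
  ∑ a ∈ (Finset.range (h+1)).filter (fun a => BUcond a h), P ^ a



section PQ
variable {P Q : F4[X]} (hPm : P.Monic) (hQm : Q.Monic)
  (hPi : Irreducible P) (hQi : Irreducible Q) (hPQ : P ≠ Q)

include hPm hQm hPi hQi hPQ in
lemma coprime_PQ : IsCoprime P Q := by
  rw [hPi.coprime_iff_not_dvd]
  intro hdvd
  exact hPQ (eq_of_monic_of_associated hPm hQm (hPi.associated_of_dvd hQi hdvd))

include hPm hPi in
lemma monic_dvd_pow {E : F4[X]} {a : ℕ} (hEm : E.Monic) (hd : E ∣ P ^ a) :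
    ∃ c ≤ a, E = P ^ c := by
  obtain ⟨i, hi, hassoc⟩ := (dvd_prime_pow hPi.prime a).mp hd
  exact ⟨i, hi, eq_of_monic_of_associated hEm (hPm.pow _) hassoc⟩

include hPm hQm hPi hQi in
lemma monic_dvd_pow_mul_pow {E : F4[X]} {a b : ℕ} (hEm : E.Monic)
    (hd : E ∣ P ^ a * Q ^ b) : ∃ c ≤ a, ∃ d ≤ b, E = P ^ c * Q ^ d := by
  obtain ⟨e1, e2, h1, h2, he⟩ := exists_dvd_and_dvd_of_dvd_mul hd
  obtain ⟨c, hc, a1⟩ := (dvd_prime_pow hPi.prime a).mp h1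
  obtain ⟨d, hd', a2⟩ := (dvd_prime_pow hQi.prime b).mp h2
  refine ⟨c, hc, d, hd', eq_of_monic_of_associated hEm ((hPm.pow _).mul (hQm.pow _)) ?_⟩
  rw [he]; exact a1.mul_mul a2

include hPm hPi in
lemma P_pow_inj {c d : ℕ} (h : P ^ c = P ^ d) : c = d := by
  have := congrArg natDegree h
  rw [hPm.natDegree_pow, hPm.natDegree_pow] at this
  exact Nat.eq_of_mul_eq_mul_right hPi.natDegree_pos this

include hPm hQm hPi hQi hPQ in
lemma pow_mul_pow_inj {a b c d : ℕ} (h : P ^ a * Q ^ b = P ^ c * Q ^ d) :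
    a = c ∧ b = d := by
  have hPQc : IsCoprime P Q := coprime_PQ hPm hQm hPi hQi hPQ
  have key : ∀ a b c d : ℕ, a ≤ c → P ^ a * Q ^ b = P ^ c * Q ^ d → a = c ∧ b = d := by
    intro a b c d hac heq
    have hP0 : P ^ a ≠ 0 := (hPm.pow a).ne_zero
    have heq2 : P ^ a * Q ^ b = P ^ a * (P ^ (c - a) * Q ^ d) := by
      rw [heq, ← mul_assoc, ← pow_add, Nat.add_sub_cancel' hac]
    have heq3 : Q ^ b = P ^ (c - a) * Q ^ d := mul_left_cancel₀ hP0 heq2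
    have hca : c - a = 0 := by
      by_contra hne
      have : P ∣ Q ^ b := heq3 ▸ (dvd_mul_of_dvd_left (dvd_pow_self P hne) _)
      exact hPi.not_isUnit ((hPQc.pow_right (n := b)).isUnit_of_dvd' dvd_rfl this)
    have hac' : a = c := by omega
    have : Q ^ b = Q ^ d := by rw [heq3, hca, pow_zero, one_mul]
    exact ⟨hac', P_pow_inj hQm hQi this⟩
  rcases le_total a c with hle | hle
  · exact key a b c d hle h
  · obtain ⟨h1, h2⟩ := key c d a b hle h.symm
    exact ⟨h1.symm, h2.symm⟩


-- quotient lemma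
include hPm hQm in
lemma quot_eq {a b h k : ℕ} (ha : a ≤ h) (hb : b ≤ k) :
    (P ^ h * Q ^ k) / (P ^ a * Q ^ b) = P ^ (h - a) * Q ^ (k - b) := by
  have hne : P ^ a * Q ^ b ≠ 0 := ((hPm.pow a).mul (hQm.pow b)).ne_zero
  have key : (P ^ a * Q ^ b) * (P ^ (h - a) * Q ^ (k - b)) = P ^ h * Q ^ k := by
    rw [mul_mul_mul_comm, ← pow_add, ← pow_add, Nat.add_sub_cancel' ha, Nat.add_sub_cancel' hb]
  rw [← key, mul_div_cancel_left₀ _ hne]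

-- unitary divisor classification, forward
include hPm hQm hPi hQi hPQ in
lemma unitary_classify {E : F4[X]} {a b : ℕ} (hEm : E.Monic)
    (hud : IsUnitaryDivisor E (P ^ a * Q ^ b)) :
    ∃ c, ∃ d, (c = 0 ∨ c = a) ∧ (d = 0 ∨ d = b) ∧ E = P ^ c * Q ^ d := by
  obtain ⟨hdvd, hcop⟩ := hud
  obtain ⟨c, hc, d, hd, hE⟩ := monic_dvd_pow_mul_pow hPm hQm hPi hQi hEm hdvd
  have hquot : (P ^ a * Q ^ b) / E = P ^ (a - c) * Q ^ (b - d) := by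
    rw [hE]; exact quot_eq hPm hQm hc hd
  rw [hquot, hE] at hcop
  refine ⟨c, d, ?_, ?_, hE⟩
  · rcases Nat.eq_zero_or_pos c with h0 | hcpos
    · exact Or.inl h0
    · right
      by_contra hne
      have h1 : P ∣ P ^ c * Q ^ d := dvd_mul_of_dvd_left (dvd_pow_self P (by omega)) _
      have h2 : P ∣ P ^ (a - c) * Q ^ (b - d) :=
        dvd_mul_of_dvd_left (dvd_pow_self P (by omega)) _
      exact hPi.not_isUnit (hcop.isUnit_of_dvd' h1 h2)
  · rcases Nat.eq_zero_or_pos d with h0 | hdpos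
    · exact Or.inl h0
    · right
      by_contra hne
      have h1 : Q ∣ P ^ c * Q ^ d := dvd_mul_of_dvd_right (dvd_pow_self Q (by omega)) _
      have h2 : Q ∣ P ^ (a - c) * Q ^ (b - d) :=
        dvd_mul_of_dvd_right (dvd_pow_self Q (by omega)) _
      exact hQi.not_isUnit (hcop.isUnit_of_dvd' h1 h2)

-- unitary divisor, backward
include hPm hQm hPi hQi hPQ in
lemma unitary_mk {a b : ℕ} {c d : ℕ} (hc : c = 0 ∨ c = a) (hd : d = 0 ∨ d = b) :
    IsUnitaryDivisor (P ^ c * Q ^ d) (P ^ a * Q ^ b) := by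
  have hca : c ≤ a := by rcases hc with h | h <;> omega
  have hdb : d ≤ b := by rcases hd with h | h <;> omega
  have hPQc : IsCoprime P Q := coprime_PQ hPm hQm hPi hQi hPQ
  constructor
  · exact mul_dvd_mul (pow_dvd_pow P hca) (pow_dvd_pow Q hdb)
  · rw [quot_eq hPm hQm hca hdb]
    have c1 : IsCoprime (P ^ c) (P ^ (a - c)) := by
      rcases hc with h | h
      · subst h; simpa using isCoprime_one_left
      · subst h; rw [Nat.sub_self, pow_zero]; exact isCoprime_one_right
    have c2 : IsCoprime (Q ^ d) (Q ^ (b - d)) := by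
      rcases hd with h | h
      · subst h; simpa using isCoprime_one_left
      · subst h; rw [Nat.sub_self, pow_zero]; exact isCoprime_one_right
    have c3 : IsCoprime (P ^ c) (Q ^ (b - d)) := hPQc.pow
    have c4 : IsCoprime (Q ^ d) (P ^ (a - c)) := hPQc.symm.pow
    exact (c1.mul_right c3).mul_left (c4.mul_right c2)


include hPm hQm hPi hQi hPQ in
lemma gcdU_pp_eq_one_iff {a b a' b' : ℕ} :
    gcdU (P ^ a * Q ^ b) (P ^ a' * Q ^ b') = 1 ↔
      ((a = 0 ∨ a' = 0 ∨ a ≠ a') ∧ (b = 0 ∨ b' = 0 ∨ b ≠ b')) := by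
  rw [gcdU_eq_one_iff]
  constructor
  · intro hall
    constructor
    · by_contra hcon
      push_neg at hcon
      obtain ⟨ha, ha', haa⟩ := hcon
      have h1 : IsUnitaryDivisor (P ^ a * Q ^ 0) (P ^ a * Q ^ b) :=
        unitary_mk hPm hQm hPi hQi hPQ (Or.inr rfl) (Or.inl rfl)
      have h2 : IsUnitaryDivisor (P ^ a * Q ^ 0) (P ^ a' * Q ^ b') :=
        unitary_mk hPm hQm hPi hQi hPQ (Or.inr haa) (Or.inl rfl)
      have := hall _ ((hPm.pow a).mul (hQm.pow 0)) h1 h2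
      rw [pow_zero, mul_one] at this
      have := congrArg natDegree this
      rw [hPm.natDegree_pow, natDegree_one] at this
      have := hPi.natDegree_pos
      exact absurd ‹a * P.natDegree = 0› (by positivity)
    · by_contra hcon
      push_neg at hcon
      obtain ⟨hb, hb', hbb⟩ := hcon
      have h1 : IsUnitaryDivisor (P ^ 0 * Q ^ b) (P ^ a * Q ^ b) :=
        unitary_mk hPm hQm hPi hQi hPQ (Or.inl rfl) (Or.inr rfl)
      have h2 : IsUnitaryDivisor (P ^ 0 * Q ^ b) (P ^ a' * Q ^ b') :=
        unitary_mk hPm hQm hPi hQi hPQ (Or.inl rfl) (Or.inr hbb)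
      have := hall _ ((hPm.pow 0).mul (hQm.pow b)) h1 h2
      rw [pow_zero, one_mul] at this
      have := congrArg natDegree this
      rw [hQm.natDegree_pow, natDegree_one] at this
      have := hQi.natDegree_pos
      exact absurd ‹b * Q.natDegree = 0› (by positivity)
  · rintro ⟨hA, hB⟩ E hEm h1 h2
    obtain ⟨c, d, hc, hd, hE⟩ := unitary_classify hPm hQm hPi hQi hPQ hEm h1
    obtain ⟨c', d', hc', hd', hE'⟩ := unitary_classify hPm hQm hPi hQi hPQ hEm h2
    obtain ⟨hcc, hdd⟩ := pow_mul_pow_inj hPm hQm hPi hQi hPQ (hE.symm.trans hE')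
    have hc0 : c = 0 := by
      rcases hc with h | h
      · exact h
      · rcases hc' with h' | h'
        · omega
        · rcases hA with hA | hA | hA <;> omega
    have hd0 : d = 0 := by
      rcases hd with h | h
      · exact h
      · rcases hd' with h' | h'
        · omega
        · rcases hB with hB | hB | hB <;> omega
    rw [hE, hc0, hd0, pow_zero, pow_zero, mul_one]

include hPm hQm hPi hQi hPQ in
lemma biunitary_set_eq (h k : ℕ) :
    {D : F4[X] | D.Monic ∧ IsBiunitaryDivisor D (P ^ h * Q ^ k)} =
      ↑(((Finset.range (h+1) ×ˢ Finset.range (k+1)).filter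
          (fun pr => BUcond pr.1 h ∧ BUcond pr.2 k)).image
        (fun pr => P ^ pr.1 * Q ^ pr.2)) := by
  ext D
  simp only [Set.mem_setOf_eq, Finset.coe_image, Set.mem_image, Finset.mem_coe,
    Finset.mem_filter, Finset.mem_product, Finset.mem_range]
  constructor
  · rintro ⟨hDm, hdvd, hg⟩
    obtain ⟨c, hc, d, hd, hE⟩ := monic_dvd_pow_mul_pow hPm hQm hPi hQi hDm hdvd
    subst hE
    rw [quot_eq hPm hQm hc hd, gcdU_pp_eq_one_iff hPm hQm hPi hQi hPQ] at hg
    exact ⟨(c, d), ⟨⟨by omega, by omega⟩, hg.1, hg.2⟩, rfl⟩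
  · rintro ⟨⟨a, b⟩, ⟨⟨ha, hb⟩, hca, hcb⟩, rfl⟩
    have ha' : a ≤ h := by omega
    have hb' : b ≤ k := by omega
    refine ⟨(hPm.pow a).mul (hQm.pow b),
      mul_dvd_mul (pow_dvd_pow P ha') (pow_dvd_pow Q hb'), ?_⟩
    rw [quot_eq hPm hQm ha' hb', gcdU_pp_eq_one_iff hPm hQm hPi hQi hPQ]
    exact ⟨hca, hcb⟩

include hPm hQm hPi hQi hPQ in
lemma sigmaBU_pp (h k : ℕ) :
    sigmaBU (P ^ h * Q ^ k) = SE P h * SE Q k := by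
  rw [sigmaBU, biunitary_set_eq hPm hQm hPi hQi hPQ h k, finsum_mem_coe_finset,
    Finset.sum_image]
  · rw [Finset.filter_product (fun a => BUcond a h) (fun b => BUcond b k), Finset.sum_product, ← Finset.sum_mul_sum]
    rfl
  · rintro ⟨a, b⟩ _ ⟨c, d⟩ _ heq
    have := pow_mul_pow_inj hPm hQm hPi hQi hPQ heq
    simp only [Prod.mk.injEq]
    exact this

include hPm hPi in
lemma SE_monic {h : ℕ} : (SE P h).Monic ∧ (SE P h).natDegree = h * P.natDegree := by
  have hp := hPi.natDegree_pos
  have hmem : h ∈ (Finset.range (h+1)).filter (fun a => BUcond a h) := by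
    simp only [Finset.mem_filter, Finset.mem_range]
    exact ⟨by omega, Or.inr (Or.inl (Nat.sub_self h))⟩
  have hsplit : P ^ h + ∑ a ∈ ((Finset.range (h+1)).filter (fun a => BUcond a h)).erase h,
      P ^ a = SE P h := Finset.add_sum_erase _ _ hmem
  have hbot : (⊥ : WithBot ℕ) < (P ^ h).degree := by
    rw [bot_lt_iff_ne_bot, Ne, degree_eq_bot]
    exact (hPm.pow h).ne_zero
  have hlt : (∑ a ∈ ((Finset.range (h+1)).filter (fun a => BUcond a h)).erase h,
      P ^ a).degree < (P ^ h).degree := by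
    refine lt_of_le_of_lt (degree_sum_le _ _) ?_
    rw [Finset.sup_lt_iff hbot]
    intro a ha
    simp only [Finset.mem_erase, Finset.mem_filter, Finset.mem_range] at ha
    apply degree_lt_degree
    rw [hPm.natDegree_pow, hPm.natDegree_pow]
    have hah : a < h := by omega
    exact (Nat.mul_lt_mul_right hp).mpr hah
  constructor
  · rw [← hsplit]; exact (hPm.pow h).add_of_left hlt
  · rw [← hsplit, natDegree_add_eq_left_of_degree_lt hlt, hPm.natDegree_pow]

lemma SE_coprime {h : ℕ} : IsCoprime P (SE P h) := by
  have hmem : 0 ∈ (Finset.range (h+1)).filter (fun a => BUcond a h) := by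
    simp only [Finset.mem_filter, Finset.mem_range]
    exact ⟨by omega, Or.inl rfl⟩
  have hsplit : P ^ 0 + ∑ a ∈ ((Finset.range (h+1)).filter (fun a => BUcond a h)).erase 0,
      P ^ a = SE P h := Finset.add_sum_erase _ _ hmem
  have hdvd : P ∣ ∑ a ∈ ((Finset.range (h+1)).filter (fun a => BUcond a h)).erase 0, P ^ a := by
    refine Finset.dvd_sum ?_
    intro a ha
    simp only [Finset.mem_erase] at ha
    exact dvd_pow_self P ha.1
  obtain ⟨t, ht⟩ := hdvd
  have : SE P h = 1 + P * t := by rw [← hsplit, pow_zero, ht]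
  rw [this]
  exact (isCoprime_one_right).add_mul_left_right t

include hPm hQm hPi hQi hPQ in
lemma SE_eq_pow {h k : ℕ} (hbup : IsBUPerfect (P ^ h * Q ^ k)) :
    SE P h = Q ^ k := by
  have heq : SE P h * SE Q k = P ^ h * Q ^ k := by
    rw [← sigmaBU_pp hPm hQm hPi hQi hPQ h k]; exact hbup
  have hcQ : IsCoprime (Q ^ k) (SE Q k) := (SE_coprime (P := Q)).pow_left
  have hdvdQ : Q ^ k ∣ SE P h :=
    hcQ.dvd_of_dvd_mul_right (by rw [heq]; exact dvd_mul_left _ _)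
  have hcP : IsCoprime (P ^ h) (SE P h) := (SE_coprime (P := P)).pow_left
  have hdvdP : P ^ h ∣ SE Q k := by
    refine hcP.dvd_of_dvd_mul_right ?_
    rw [mul_comm (SE Q k) (SE P h), heq]
    exact dvd_mul_right _ _
  obtain ⟨W, hW⟩ := hdvdQ
  obtain ⟨V, hV⟩ := hdvdP
  have hWm : W.Monic := (hQm.pow k).of_mul_monic_left (hW ▸ (SE_monic hPm hPi (h := h)).1)
  have hne : P ^ h * Q ^ k ≠ 0 := ((hPm.pow h).mul (hQm.pow k)).ne_zero
  have h2 : (Q ^ k * W) * (P ^ h * V) = P ^ h * Q ^ k := by rw [← hW, ← hV]; exact heq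
  have hWV1 : W * V = 1 := by
    apply mul_left_cancel₀ hne
    rw [mul_one]
    calc (P ^ h * Q ^ k) * (W * V) = (Q ^ k * W) * (P ^ h * V) := by ring
      _ = P ^ h * Q ^ k := h2
  have : W = 1 := hWm.eq_one_of_isUnit (IsUnit.of_mul_eq_one _ hWV1)
  rw [hW, this, mul_one]

-- chunk f: arithmetic of geometric sums in characteristic 2
include hPm hPi in
lemma P1_monic : (P + 1).Monic ∧ (P + 1).natDegree = P.natDegree := by
  have hlt : (1 : F4[X]).degree < P.degree :=
    degree_lt_degree (by simpa using hPi.natDegree_pos)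
  exact ⟨hPm.add_of_left hlt, natDegree_add_eq_left_of_degree_lt hlt⟩

include hPm hPi in
lemma pow_add_one_monic {m : ℕ} (hm : 1 ≤ m) :
    (P ^ m + 1).Monic ∧ (P ^ m + 1).natDegree = m * P.natDegree := by
  have hlt : (1 : F4[X]).degree < (P ^ m).degree := by
    apply degree_lt_degree
    rw [hPm.natDegree_pow, natDegree_one]
    have := hPi.natDegree_pos
    positivity
  exact ⟨(hPm.pow m).add_of_left hlt,
    by rw [natDegree_add_eq_left_of_degree_lt hlt, hPm.natDegree_pow]⟩

lemma GS_mul {m : ℕ} : (P + 1) * GS P m = P ^ m + 1 := by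
  have hgeo := geom_sum_mul P m
  rw [CharTwo.sub_eq_add, CharTwo.sub_eq_add] at hgeo
  rw [GS, mul_comm]
  exact hgeo

include hPm hPi in
lemma GS_monic {m : ℕ} (hm : 1 ≤ m) :
    (GS P m).Monic ∧ (GS P m).natDegree = (m - 1) * P.natDegree := by
  have h1 := P1_monic hPm hPi
  have h2 := pow_add_one_monic hPm hPi hm
  have hmul := GS_mul (P := P) (m := m)
  have hGm : (GS P m).Monic := h1.1.of_mul_monic_left (by rw [hmul]; exact h2.1)
  refine ⟨hGm, ?_⟩
  have := natDegree_mul h1.1.ne_zero hGm.ne_zero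
  rw [hmul, h2.2, h1.2] at this
  have hp := hPi.natDegree_pos
  rcases Nat.exists_eq_add_of_le hm with ⟨j, rfl⟩
  simp only [Nat.add_sub_cancel_left] at *
  have hex : (1 + j) * P.natDegree = P.natDegree + j * P.natDegree := by ring
  omega

include hPm hPi in
lemma GS_eq_one_iff {m : ℕ} (hm : 1 ≤ m) : GS P m = 1 ↔ m = 1 := by
  constructor
  · intro h1
    have := (GS_monic hPm hPi hm).2
    rw [h1, natDegree_one] at this
    have hp := hPi.natDegree_pos
    have : m - 1 = 0 := by
      rcases Nat.eq_zero_or_pos (m - 1) with h | h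
      · exact h
      · exfalso; have : (m-1) * P.natDegree > 0 := by positivity
        omega
    omega
  · rintro rfl
    simp [GS]

include hPm hPi in
lemma GS_coprime {m : ℕ} (hm : m % 2 = 1) : IsCoprime (P + 1) (GS P m) := by
  obtain ⟨j, rfl⟩ : ∃ j, m = 2 * j + 1 := ⟨m / 2, by omega⟩
  clear hm
  induction j with
  | zero => simp [GS]; exact isCoprime_one_right
  | succ j ih =>
    have hstep : GS P (2 * (j+1) + 1) = GS P (2 * j + 1) + (P + 1) * P ^ (2 * j + 1) := by
      have e1 : 2 * (j + 1) + 1 = (2 * j + 1) + 1 + 1 := by omega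
      rw [e1, GS, Finset.sum_range_succ, Finset.sum_range_succ, ← GS]
      ring
    rw [hstep]
    exact ih.add_mul_left_right _

include hPm hPi in
lemma pow_add_one_factor {n : ℕ} (hn : 1 ≤ n) :
    ∃ a m : ℕ, n = 2 ^ a * m ∧ m % 2 = 1 ∧
      P ^ n + 1 = (P + 1) ^ (2 ^ a) * (GS P m) ^ (2 ^ a) := by
  refine ⟨n.factorization 2, n / 2 ^ n.factorization 2, ?_, ?_, ?_⟩
  · exact (Nat.ordProj_mul_ordCompl_eq_self n 2).symm
  · have := Nat.not_dvd_ordCompl Nat.prime_two (by omega : n ≠ 0)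
    omega
  · set a := n.factorization 2
    set m := n / 2 ^ a
    have hnm : n = m * 2 ^ a := by
      rw [mul_comm]; exact (Nat.ordProj_mul_ordCompl_eq_self n 2).symm
    have h1 : P ^ n + 1 = ((P ^ m) ^ (2 ^ a)) + 1 ^ (2 ^ a) := by
      rw [← pow_mul, ← hnm, one_pow]
    rw [h1, ← add_pow_char_pow, ← GS_mul (P := P) (m := m), mul_pow]

include hQm hQi in
lemma split_pow {A B : F4[X]} (hAm : A.Monic) (hBm : B.Monic)
    (hcop : IsCoprime A B) {n : ℕ} (hAB : A * B = Q ^ n) (hA1 : A ≠ 1) : B = 1 := by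
  have hAd : A ∣ Q ^ n := ⟨B, hAB.symm⟩
  have hBd : B ∣ Q ^ n := ⟨A, by rw [mul_comm]; exact hAB.symm⟩
  obtain ⟨i, hi, rfl⟩ := monic_dvd_pow hQm hQi hAm hAd
  obtain ⟨j, hj, rfl⟩ := monic_dvd_pow hQm hQi hBm hBd
  have hi1 : 1 ≤ i := by
    rcases Nat.eq_zero_or_pos i with h | h
    · exact absurd (by rw [h, pow_zero]) hA1
    · exact h
  rcases Nat.eq_zero_or_pos j with h | h
  · rw [h, pow_zero]
  · exfalso
    exact hQi.not_isUnit (hcop.isUnit_of_dvd' (dvd_pow_self Q (by omega))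
      (dvd_pow_self Q (by omega)))

include hPm hQm hPi hQi in
lemma Q_eq_P1 (hdeg : P.natDegree ≤ Q.natDegree) {s k : ℕ} (hs : 1 ≤ s) (heq : Q ^ k = (P + 1) ^ s) :
    Q = P + 1 ∧ k = s := by
  have h1 := P1_monic hPm hPi
  have hp := hPi.natDegree_pos
  have hk1 : 1 ≤ k := by
    by_contra hcon
    have hk0 : k = 0 := by omega
    rw [hk0, pow_zero] at heq
    have hnd := congrArg natDegree heq
    rw [natDegree_one, h1.1.natDegree_pow, h1.2] at hnd
    have : 0 < s * P.natDegree := by positivity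
    omega
  have hQdvd : Q ∣ P + 1 := by
    apply hQi.prime.dvd_of_dvd_pow (n := s)
    rw [← heq]
    exact dvd_pow_self Q (by omega)
  have hqp : Q.natDegree ≤ (P + 1).natDegree := natDegree_le_of_dvd hQdvd h1.1.ne_zero
  rw [h1.2] at hqp
  obtain ⟨c, hc⟩ := hQdvd
  have hcm : c.Monic := hQm.of_mul_monic_left (hc ▸ h1.1)
  have hdc : c.natDegree = 0 := by
    have := natDegree_mul hQm.ne_zero hcm.ne_zero
    rw [← hc, h1.2] at this
    omega
  have hc1 : c = 1 := eq_one_of_monic_natDegree_zero hcm hdc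
  rw [hc1, mul_one] at hc
  refine ⟨hc.symm, ?_⟩
  rw [hc] at heq
  exact P_pow_inj hQm hQi heq

include hPm hQm hPi hQi hPQ in
lemma case_odd (hdeg : P.natDegree ≤ Q.natDegree) {h k : ℕ} (hh : 1 ≤ h) (hodd : h % 2 = 1)
    (hSE : SE P h = Q ^ k) :
    Q = P + 1 ∧ ∃ r : ℕ, h = 2 ^ r - 1 ∧ k = 2 ^ r - 1 := by
  have hp := hPi.natDegree_pos
  have hP1 := P1_monic hPm hPi
  -- SE P h = GS P (h+1)
  have hfull : SE P h = GS P (h + 1) := by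
    rw [SE, GS, Finset.filter_true_of_mem]
    intro a ha
    simp only [Finset.mem_range] at ha
    simp only [BUcond]
    omega
  obtain ⟨a, m, hnm, hmodd, hfact⟩ := pow_add_one_factor hPm hPi (n := h + 1) (by omega)
  have ha1 : 1 ≤ a := by
    rcases Nat.eq_zero_or_pos a with h0 | h0
    · rw [h0, pow_zero, one_mul] at hnm; omega
    · exact h0
  obtain ⟨t, ht⟩ : ∃ t, 2 ^ a = t + 1 := by
    have : 1 ≤ 2 ^ a := Nat.one_le_two_pow
    exact ⟨2 ^ a - 1, by omega⟩
  have ht1 : 1 ≤ t := by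
    have h22 : 2 ≤ 2 ^ a := by
      calc 2 = 2 ^ 1 := rfl
      _ ≤ 2 ^ a := Nat.pow_le_pow_right (by omega) ha1
    omega
  have hQk : Q ^ k = (P + 1) ^ t * (GS P m) ^ (2 ^ a) := by
    apply mul_left_cancel₀ hP1.1.ne_zero
    calc (P + 1) * Q ^ k = (P + 1) * SE P h := by rw [hSE]
      _ = (P + 1) * GS P (h + 1) := by rw [hfull]
      _ = P ^ (h + 1) + 1 := GS_mul
      _ = (P + 1) ^ (2 ^ a) * (GS P m) ^ (2 ^ a) := hfact
      _ = (P + 1) * ((P + 1) ^ t * (GS P m) ^ (2 ^ a)) := by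
          rw [ht, pow_succ']
          ring
  have hm1 : 1 ≤ m := by
    rcases Nat.eq_zero_or_pos m with h0 | h0
    · omega
    · exact h0
  have hGSm := GS_monic hPm hPi hm1
  have hA1 : (P + 1) ^ t ≠ 1 := by
    intro hcon
    have hd := congrArg natDegree hcon
    rw [hP1.1.natDegree_pow, hP1.2, natDegree_one] at hd
    have : 0 < t * P.natDegree := by positivity
    omega
  have hB1 : (GS P m) ^ (2 ^ a) = 1 := by
    refine split_pow hQm hQi (hP1.1.pow _) (hGSm.1.pow _)
      ((GS_coprime hPm hPi hmodd).pow) hQk.symm hA1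
  have hGS1 : GS P m = 1 := by
    apply eq_one_of_monic_natDegree_zero hGSm.1
    have hd := congrArg natDegree hB1
    rw [hGSm.1.natDegree_pow, natDegree_one] at hd
    rcases Nat.mul_eq_zero.mp hd with h0 | h0
    · exact absurd h0 (Nat.two_pow_pos a).ne'
    · exact h0
  have hm : m = 1 := (GS_eq_one_iff hPm hPi hm1).mp hGS1
  rw [hm, mul_one] at hnm
  rw [hGS1, one_pow, mul_one] at hQk
  obtain ⟨hQeq, hkeq⟩ := Q_eq_P1 hPm hQm hPi hQi hdeg ht1 hQk
  exact ⟨hQeq, a, by omega, by omega⟩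

include hPm hQm hPi hQi hPQ in
lemma case_even (hdeg : P.natDegree ≤ Q.natDegree) {h k : ℕ} (hh : 1 ≤ h) (heven : h % 2 = 0)
    (hSE : SE P h = Q ^ k) :
    Q = P + 1 ∧ h = 2 ∧ k = 2 := by
  have hp := hPi.natDegree_pos
  have hP1 := P1_monic hPm hPi
  obtain ⟨m, rfl⟩ : ∃ m, h = 2 * m := ⟨h / 2, by omega⟩
  have hm1 : 1 ≤ m := by omega
  -- SE P (2m) = GS P m * (P^(m+1) + 1)
  have hfilter : (Finset.range (2 * m + 1)).filter (fun a => BUcond a (2 * m)) =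
      (Finset.range (2 * m + 1)).erase m := by
    ext a
    rw [Finset.mem_filter]
    simp only [Finset.mem_filter, Finset.mem_range, Finset.mem_erase, BUcond]
    omega
  have hsum : SE P (2 * m) + P ^ m = GS P (2 * m + 1) := by
    rw [SE, hfilter, GS]
    exact Finset.sum_erase_add _ _ (by simp only [Finset.mem_range]; omega)
  have hSE2 : SE P (2 * m) = GS P (2 * m + 1) + P ^ m := by
    rw [← hsum, add_assoc, CharTwo.add_self_eq_zero, add_zero]
  have hkey : SE P (2 * m) = GS P m * (P ^ (m + 1) + 1) := by
    apply mul_left_cancel₀ hP1.1.ne_zero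
    calc (P + 1) * SE P (2 * m) = (P + 1) * GS P (2 * m + 1) + (P + 1) * P ^ m := by
          rw [hSE2]; ring
      _ = (P ^ (2 * m + 1) + 1) + (P + 1) * P ^ m := by rw [GS_mul]
      _ = (P ^ m + 1) * (P ^ (m + 1) + 1) := by ring
      _ = ((P + 1) * GS P m) * (P ^ (m + 1) + 1) := by rw [GS_mul]
      _ = (P + 1) * (GS P m * (P ^ (m + 1) + 1)) := by ring
  rw [hSE] at hkey
  -- B = P^(m+1)+1 is a power of Q
  have hBm := pow_add_one_monic hPm hPi (m := m + 1) (by omega)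
  have hGSm := GS_monic hPm hPi hm1
  have hBdvd : P ^ (m + 1) + 1 ∣ Q ^ k := ⟨GS P m, by rw [hkey]; ring⟩
  obtain ⟨j2, hj2, hB⟩ := monic_dvd_pow hQm hQi hBm.1 hBdvd
  have hj21 : 1 ≤ j2 := by
    rcases Nat.eq_zero_or_pos j2 with h0 | h0
    · exfalso
      rw [h0, pow_zero] at hB
      have hd := congrArg natDegree hB
      rw [hBm.2, natDegree_one] at hd
      have : 0 < (m + 1) * P.natDegree := by positivity
      omega
    · exact h0
  -- decompose m+1
  obtain ⟨b, m', hbm, hm'odd, hfactB⟩ := pow_add_one_factor hPm hPi (n := m + 1) (by omega)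
  have hQj2 : Q ^ j2 = (P + 1) ^ (2 ^ b) * (GS P m') ^ (2 ^ b) := by rw [← hB, hfactB]
  have hm'1 : 1 ≤ m' := by
    rcases Nat.eq_zero_or_pos m' with h0 | h0
    · omega
    · exact h0
  have hGSm' := GS_monic hPm hPi hm'1
  have hA1 : (P + 1) ^ (2 ^ b) ≠ 1 := by
    intro hcon
    have hd := congrArg natDegree hcon
    rw [hP1.1.natDegree_pow, hP1.2, natDegree_one] at hd
    rcases Nat.mul_eq_zero.mp hd with h0 | h0
    · exact absurd h0 (Nat.two_pow_pos b).ne'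
    · omega
  have hB1 : (GS P m') ^ (2 ^ b) = 1 :=
    split_pow hQm hQi (hP1.1.pow _) (hGSm'.1.pow _)
      ((GS_coprime hPm hPi hm'odd).pow) hQj2.symm hA1
  have hGS1 : GS P m' = 1 := by
    apply eq_one_of_monic_natDegree_zero hGSm'.1
    have hd := congrArg natDegree hB1
    rw [hGSm'.1.natDegree_pow, natDegree_one] at hd
    rcases Nat.mul_eq_zero.mp hd with h0 | h0
    · exact absurd h0 (Nat.two_pow_pos b).ne'
    · exact h0
  have hm'eq : m' = 1 := (GS_eq_one_iff hPm hPi hm'1).mp hGS1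
  rw [hm'eq, mul_one] at hbm   -- m + 1 = 2 ^ b
  rw [hGS1, one_pow, mul_one] at hQj2
  have hb1 : 1 ≤ 2 ^ b := Nat.one_le_two_pow
  obtain ⟨hQeq, hj2eq⟩ := Q_eq_P1 hPm hQm hPi hQi hdeg (by omega : 1 ≤ 2 ^ b) hQj2
  -- now split on m = 1 or m ≥ 2
  rcases eq_or_lt_of_le hm1 with hm | hm
  · -- m = 1 : conclude
    have hm' : m = 1 := hm.symm
    subst hm'
    have hGS1' : GS P 1 = 1 := by simp [GS]
    rw [hGS1', one_mul] at hkey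
    -- Q^k = P^2+1 = (P+1)^2
    have hsq : Q ^ k = (P + 1) ^ 2 := by
      rw [hkey]
      have h2 : (P + 1) ^ 2 = P ^ 2 + 1 ^ 2 := add_pow_char P 1 2
      rw [h2, one_pow]
    obtain ⟨_, hk2⟩ := Q_eq_P1 hPm hQm hPi hQi hdeg (by omega) hsq
    exact ⟨hQeq, rfl, hk2⟩
  · -- m ≥ 2 : contradiction
    exfalso
    have hGSdvd : GS P m ∣ Q ^ k := ⟨P ^ (m + 1) + 1, hkey⟩
    obtain ⟨j1, hj1, hGSQ⟩ := monic_dvd_pow hQm hQi hGSm.1 hGSdvd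
    -- P^m + 1 = (P+1)^(j1+1)
    have hPm1 : P ^ m + 1 = (P + 1) ^ (j1 + 1) := by
      rw [← GS_mul (P := P) (m := m), hGSQ, hQeq, pow_succ']
    obtain ⟨c, m'', hcm, hm''odd, hfactC⟩ := pow_add_one_factor hPm hPi (n := m) (by omega)
    have hm''1 : 1 ≤ m'' := by
      rcases Nat.eq_zero_or_pos m'' with h0 | h0
      · omega
      · exact h0
    have hGSm'' := GS_monic hPm hPi hm''1
    have hC : (P + 1) ^ (j1 + 1) = (P + 1) ^ (2 ^ c) * (GS P m'') ^ (2 ^ c) := by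
      rw [← hPm1, hfactC]
    have hA1' : (P + 1) ^ (2 ^ c) ≠ 1 := by
      intro hcon
      have hd := congrArg natDegree hcon
      rw [hP1.1.natDegree_pow, hP1.2, natDegree_one] at hd
      rcases Nat.mul_eq_zero.mp hd with h0 | h0
      · exact absurd h0 (Nat.two_pow_pos c).ne'
      · omega
    -- (P+1)^(j1+1) is a power of Q = P+1
    have hC' : (P + 1) ^ (2 ^ c) * (GS P m'') ^ (2 ^ c) = Q ^ (j1 + 1) := by
      rw [← hC, hQeq]
    have hB1' : (GS P m'') ^ (2 ^ c) = 1 :=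
      split_pow hQm hQi (hP1.1.pow _) (hGSm''.1.pow _)
        ((GS_coprime hPm hPi hm''odd).pow) hC' hA1'
    have hGS1'' : GS P m'' = 1 := by
      apply eq_one_of_monic_natDegree_zero hGSm''.1
      have hd := congrArg natDegree hB1'
      rw [hGSm''.1.natDegree_pow, natDegree_one] at hd
      rcases Nat.mul_eq_zero.mp hd with h0 | h0
      · exact absurd h0 (Nat.two_pow_pos c).ne'
      · exact h0
    have hm''eq : m'' = 1 := (GS_eq_one_iff hPm hPi hm''1).mp hGS1''
    rw [hm''eq, mul_one] at hcm  -- m = 2 ^ c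
    -- m = 2^c ≥ 2 and m + 1 = 2^b : contradiction
    have hc1 : 1 ≤ c := by
      rcases Nat.eq_zero_or_pos c with h0 | h0
      · rw [h0, pow_zero] at hcm; omega
      · exact h0
    have hb1' : 1 ≤ b := by
      rcases Nat.eq_zero_or_pos b with h0 | h0
      · rw [h0, pow_zero] at hbm; omega
      · exact h0
    obtain ⟨c', rfl⟩ : ∃ c', c = c' + 1 := ⟨c - 1, by omega⟩
    obtain ⟨b', rfl⟩ : ∃ b', b = b' + 1 := ⟨b - 1, by omega⟩
    rw [pow_succ] at hbm hcm
    omega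

end PQ

theorem stmt10 (P Q : F4[X]) (hPm : P.Monic) (hQm : Q.Monic)
    (hPi : Irreducible P) (hQi : Irreducible Q) (hPQ : P ≠ Q)
    (hdeg : P.natDegree ≤ Q.natDegree)
    (h k : ℕ) (hh : 0 < h) (hk : 0 < k)
    (hbup : IsBUPerfect (P ^ h * Q ^ k)) :
    Q = P + 1 ∧ ((h = 2 ∧ k = 2) ∨ ∃ r : ℕ, h = 2 ^ r - 1 ∧ k = 2 ^ r - 1) := by
  have hSE : SE P h = Q ^ k := SE_eq_pow hPm hQm hPi hQi hPQ hbup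
  rcases Nat.mod_two_eq_zero_or_one h with he | ho
  · obtain ⟨hQeq, hh2, hk2⟩ := case_even hPm hQm hPi hQi hPQ hdeg hh he hSE
    exact ⟨hQeq, Or.inl ⟨hh2, hk2⟩⟩
  · obtain ⟨hQeq, r, hr1, hr2⟩ := case_odd hPm hQm hPi hQi hPQ hdeg hh ho hSE
    exact ⟨hQeq, Or.inr ⟨r, hr1, hr2⟩⟩
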